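/- arXiv:1212.0821 — 3 statements merged into one kernel-verified Lean document; each statement's English description precedes it below -/
import Mathlib

section
/- Consistency theorem for greedy κ-sums (Theorem 1): Let S be an index set and (a_s)_{s∈S} a family of complex numbers such that for every ε > 0 the set {s ∈ S : |a_s| > ε} is finite. If for some κ ≥ 0 the family has greedy κ-sum equal to A, then for every κ' with κ' ≥ κ the family has greedy κ'-sum, and this greedy κ'-sum is also equal to A. -/
open Filter Topology

open MeasureTheory Set Real intervalIntegral

/-- The Riesz-type partial sum of a family of complex numbers at level `ε > 0`:
`∑_{s : |a s| > ε} (1 - ε/|a s|)^κ • a s`. -/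
noncomputable def greedyPartialSum {S : Type*} (a : S → ℂ) (κ : ℝ) (ε : ℝ) : ℂ :=
  ∑ᶠ s ∈ {s | ε < ‖a s‖}, ((1 - ε / ‖a s‖) ^ κ : ℝ) • a s

/-- A family `a : S → ℂ` has greedy `κ`-sum `A` if its Riesz-type partial sums
converge to `A` as `ε → 0⁺`. -/
def HasGreedySum {S : Type*} (a : S → ℂ) (κ : ℝ) (A : ℂ) : Prop :=
  Tendsto (greedyPartialSum a κ) (𝓝[>] (0 : ℝ)) (𝓝 A)

section helpers
lemma contRpowConst (κ : ℝ) (hκ : 0 ≤ κ) : Continuous fun x : ℝ => x ^ κ :=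
  continuous_iff_continuousAt.2 fun x => Real.continuousAt_rpow_const x κ (Or.inr hκ)

lemma invSwap {x y : ℝ} (hx : 0 < x) (h : x⁻¹ < y) : y⁻¹ < x := by
  have hy : 0 < y := lt_trans (inv_pos.2 hx) h
  have h1 : (1:ℝ) < y * x := by
    have := mul_lt_mul_of_pos_right h hx
    rwa [inv_mul_cancel₀ hx.ne'] at this
  have h2 := mul_lt_mul_of_pos_left h1 (inv_pos.2 hy)
  rwa [mul_one, ← mul_assoc, inv_mul_cancel₀ hy.ne', one_mul] at h2

lemma invAnti {x y : ℝ} (hx : 0 < x) (h : x ≤ y) : y⁻¹ ≤ x⁻¹ := by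
  have hy : 0 < y := lt_of_lt_of_le hx h
  have h2 : y⁻¹ * x ≤ y⁻¹ * y := mul_le_mul_of_nonneg_left h (inv_pos.2 hy).le
  rw [inv_mul_cancel₀ hy.ne'] at h2
  have h3 := mul_le_mul_of_nonneg_right h2 (inv_pos.2 hx).le
  rwa [mul_assoc, mul_inv_cancel₀ hx.ne', mul_one, one_mul] at h3
end helpers

lemma integRefl (l p : ℝ) (hp : -1 < p) (a b : ℝ) :
    IntervalIntegrable (fun t => (l - t) ^ p) volume a b := by
  have h := (intervalIntegrable_rpow' (a := l - a) (b := l - b) hp).comp_sub_left l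
  simpa using h

lemma evalBeta (δ κ : ℝ) (hδ : 0 < δ) (hκ : 0 ≤ κ) {μ lam : ℝ} (hml : μ < lam) :
    ∫ t in μ..lam, (lam - t) ^ (δ - 1) * (t - μ) ^ κ
      = (lam - μ) ^ (κ + δ) * ∫ u in (0:ℝ)..1, (1 - u) ^ (δ - 1) * u ^ κ := by
  have hcpos : (0:ℝ) < lam - μ := sub_pos.2 hml
  have hc : lam - μ ≠ 0 := hcpos.ne'
  have h1 := intervalIntegral.integral_comp_mul_add (a := (0:ℝ)) (b := 1)
      (f := fun t => (lam - t) ^ (δ - 1) * (t - μ) ^ κ) hc μ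
  have hb0 : (lam - μ) * 0 + μ = μ := by ring
  have hb1 : (lam - μ) * 1 + μ = lam := by ring
  rw [hb0, hb1] at h1
  have h2 : EqOn (fun x : ℝ => (lam - ((lam - μ) * x + μ)) ^ (δ - 1) * ((lam - μ) * x + μ - μ) ^ κ)
      (fun x : ℝ => (lam - μ) ^ (δ - 1 + κ) * ((1 - x) ^ (δ - 1) * x ^ κ)) (uIcc (0:ℝ) 1) := by
    intro x hx
    rw [uIcc_of_le (by norm_num : (0:ℝ) ≤ 1)] at hx
    have hx0 : 0 ≤ x := hx.1
    have hx1 : 0 ≤ 1 - x := by linarith [hx.2]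
    have e1 : lam - ((lam - μ) * x + μ) = (lam - μ) * (1 - x) := by ring
    have e2 : (lam - μ) * x + μ - μ = (lam - μ) * x := by ring
    simp only [e1, e2, Real.mul_rpow hcpos.le hx1, Real.mul_rpow hcpos.le hx0,
      Real.rpow_add hcpos]
    ring
  rw [intervalIntegral.integral_congr h2, intervalIntegral.integral_const_mul] at h1
  have h3 : (∫ t in μ..lam, (lam - t) ^ (δ - 1) * (t - μ) ^ κ)
      = (lam - μ) * ((lam - μ) ^ (δ - 1 + κ) * ∫ u in (0:ℝ)..1, (1 - u) ^ (δ - 1) * u ^ κ) := by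
    rw [smul_eq_mul] at h1
    rw [h1]
    field_simp
  rw [h3, show κ + δ = (δ - 1 + κ) + 1 by ring, Real.rpow_add_one hc]
  ring

lemma integInd (l p κ μ : ℝ) (hp : -1 < p) (hκ : 0 ≤ κ) (hμ : 0 ≤ μ) (a b : ℝ) :
    IntervalIntegrable
      (fun t => Set.indicator (Set.Ioi μ) (fun t => (t - μ) ^ κ) t * (l - t) ^ p) volume a b := by
  have hbase := integRefl l p hp a b
  rw [intervalIntegrable_iff] at hbase ⊢
  refine hbase.bdd_mul (c := (|a| + |b|) ^ κ) ?_ ?_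
  · exact (((contRpowConst κ hκ).comp (continuous_id.sub continuous_const)).measurable.indicator
      measurableSet_Ioi).aestronglyMeasurable
  · filter_upwards [MeasureTheory.ae_restrict_mem measurableSet_uIoc] with t ht
    have htle : t ≤ |a| + |b| := by
      have := ht.2
      rcases le_total a b with hab | hab
      · rw [uIoc_of_le hab] at ht
        calc t ≤ b := ht.2
        _ ≤ |a| + |b| := by have := le_abs_self b; have := abs_nonneg a; linarith
      · rw [uIoc_of_ge hab] at ht
        calc t ≤ a := ht.2
        _ ≤ |a| + |b| := by have := le_abs_self a; have := abs_nonneg b; linarith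
    by_cases h : t ∈ Set.Ioi μ
    · rw [Set.indicator_of_mem h]
      have h1 : (0:ℝ) ≤ t - μ := by
        have : μ < t := h
        linarith
      rw [Real.norm_eq_abs, abs_of_nonneg (Real.rpow_nonneg h1 κ)]
      exact Real.rpow_le_rpow h1 (by linarith) hκ
    · rw [Set.indicator_of_notMem h]
      simpa using Real.rpow_nonneg (by positivity : (0:ℝ) ≤ |a| + |b|) κ


lemma betaPos (δ κ : ℝ) (hδ : 0 < δ) (hκ : 0 ≤ κ) :
    0 < ∫ u in (0:ℝ)..1, (1 - u) ^ (δ - 1) * u ^ κ := by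
  have hint : IntervalIntegrable (fun u : ℝ => (1 - u) ^ (δ - 1) * u ^ κ) volume 0 1 :=
    (integRefl 1 (δ - 1) (by linarith) 0 1).mul_continuousOn (contRpowConst κ hκ).continuousOn
  refine intervalIntegral.intervalIntegral_pos_of_pos_on hint ?_ (by norm_num)
  intro x hx
  exact mul_pos (Real.rpow_pos_of_pos (by linarith [hx.2]) _)
    (Real.rpow_pos_of_pos hx.1 _)

lemma normGreedyLe {S : Type*} (a : S → ℂ)
    (hfin : ∀ ε > (0 : ℝ), {s | ε < ‖a s‖}.Finite)
    (κ : ℝ) (hκ : 0 ≤ κ) {ε₀ ε : ℝ} (h0 : 0 < ε₀) (hε : ε₀ ≤ ε) :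
    ‖greedyPartialSum a κ ε‖ ≤ ∑ s ∈ (hfin ε₀ h0).toFinset, ‖a s‖ := by
  have hεpos : 0 < ε := lt_of_lt_of_le h0 hε
  rw [greedyPartialSum, finsum_mem_eq_finite_toFinset_sum _ (hfin ε hεpos)]
  refine le_trans (norm_sum_le _ _) ?_
  have step1 : ∑ s ∈ (hfin ε hεpos).toFinset, ‖((1 - ε / ‖a s‖) ^ κ : ℝ) • a s‖
      ≤ ∑ s ∈ (hfin ε hεpos).toFinset, ‖a s‖ := by
    refine Finset.sum_le_sum fun s hs => ?_
    have hmem : ε < ‖a s‖ := by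
      simpa using (Set.Finite.mem_toFinset _).1 hs
    have habs : 0 < ‖a s‖ := lt_trans hεpos hmem
    have hw0 : (0:ℝ) ≤ 1 - ε / ‖a s‖ := by
      rw [sub_nonneg]
      exact div_le_one_of_le₀ hmem.le habs.le
    have hw1 : (1 - ε / ‖a s‖) ^ κ ≤ 1 := by
      apply Real.rpow_le_one hw0 _ hκ
      have : 0 ≤ ε / ‖a s‖ := div_nonneg hεpos.le habs.le
      linarith
    rw [norm_smul, Real.norm_eq_abs, abs_of_nonneg (Real.rpow_nonneg hw0 κ)]
    nlinarith [norm_nonneg (a s), Real.rpow_nonneg hw0 κ]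
  refine step1.trans (Finset.sum_le_sum_of_subset_of_nonneg ?_ ?_)
  · intro s hs
    rw [Set.Finite.mem_toFinset] at *
    exact lt_of_le_of_lt hε (by simpa using hs)
  · intro s _ _
    exact norm_nonneg _

section estimate

variable {S : Type*} (a : S → ℂ)
  (hfin : ∀ ε > (0 : ℝ), {s | ε < ‖a s‖}.Finite)

set_option maxHeartbeats 2000000 in
lemma mainEstimate (κ δ : ℝ) (hκ : 0 ≤ κ) (hδ : 0 < δ) (A : ℂ) (εh : ℝ) (hεh : 0 ≤ εh)
    (T lam : ℝ) (hT : 0 < T) (hlam2 : 2*T ≤ lam)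
    (hnear : ∀ t : ℝ, T ≤ t → ‖greedyPartialSum a κ t⁻¹ - A‖ ≤ εh) :
    ‖greedyPartialSum a (κ+δ) lam⁻¹ - A‖ ≤
      (max 1 ((2:ℝ)^(1-δ)) * ((T^κ *
          ((∑ s ∈ (hfin T⁻¹ (inv_pos.2 hT)).toFinset, ‖a s‖) + ‖A‖)) * T))
        * lam^(δ-1) / ((∫ u in (0:ℝ)..1, (1-u)^(δ-1) * u^κ) * lam^(κ+δ)) + εh := by
  have hlampos : (0:ℝ) < lam := lt_of_lt_of_le (by linarith) hlam2
  have hTlam : T < lam := by linarith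
  have hlinv : (0:ℝ) < lam⁻¹ := inv_pos.2 hlampos
  set B : ℝ := ∫ u in (0:ℝ)..1, (1-u)^(δ-1) * u^κ with hBdef
  have hB : 0 < B := betaPos δ κ hδ hκ
  set K : ℝ := max 1 ((2:ℝ)^(1-δ)) with hKdef
  have hK1 : (1:ℝ) ≤ K := le_max_left _ _
  have hKpos : (0:ℝ) < K := lt_of_lt_of_le one_pos hK1
  set Sig0 : ℝ := ∑ s ∈ (hfin T⁻¹ (inv_pos.2 hT)).toFinset, ‖a s‖ with hSigdef
  have hSig0 : 0 ≤ Sig0 := Finset.sum_nonneg fun s _ => norm_nonneg _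
  set M : ℝ := Sig0 + ‖A‖ with hMdef
  have hM0 : 0 ≤ M := by positivity
  set P : Finset S := (hfin lam⁻¹ hlinv).toFinset with hPdef
  set μs : S → ℝ := fun s => (‖a s‖)⁻¹ with hμdef
  set m : S → ℝ → ℝ := fun s t => Set.indicator (Set.Ioi (μs s)) (fun t => (t - μs s) ^ κ) t
    with hmdef
  set u : ℝ → ℂ := fun t => (∑ s ∈ P, (m s t * (lam - t)^(δ-1)) • a s)
      - ((t^κ * (lam - t)^(δ-1)) : ℝ) • A with hudef
  -- facts about members of P
  have hPabs : ∀ s ∈ P, lam⁻¹ < ‖a s‖ := by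
    intro s hs
    rw [hPdef, Set.Finite.mem_toFinset] at hs
    exact hs
  have hPμ : ∀ s ∈ P, 0 < μs s ∧ μs s < lam := by
    intro s hs
    have h1 := hPabs s hs
    have h2 : 0 < ‖a s‖ := lt_trans hlinv h1
    exact ⟨inv_pos.2 h2, invSwap hlampos h1⟩
  -- integrability
  have hδ1 : (-1:ℝ) < δ - 1 := by linarith
  have hIm : ∀ s ∈ P, ∀ a₀ b₀ : ℝ,
      IntervalIntegrable (fun t => m s t * (lam - t)^(δ-1)) volume a₀ b₀ := by
    intro s hs a₀ b₀
    exact integInd lam (δ-1) κ (μs s) hδ1 hκ ((hPμ s hs).1.le) a₀ b₀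
  have hIA : ∀ a₀ b₀ : ℝ, IntervalIntegrable (fun t => t^κ * (lam - t)^(δ-1)) volume a₀ b₀ :=
    fun a₀ b₀ => (integRefl lam (δ-1) hδ1 a₀ b₀).continuousOn_mul (contRpowConst κ hκ).continuousOn
  have hsmulC : ∀ (f : ℝ → ℝ) (c : ℂ) (a₀ b₀ : ℝ), IntervalIntegrable f volume a₀ b₀ →
      IntervalIntegrable (fun t => f t • c) volume a₀ b₀ := by
    intro f c a₀ b₀ hf
    rw [intervalIntegrable_iff] at hf ⊢
    exact hf.smul_const c
  have hIsum : ∀ a₀ b₀ : ℝ, IntervalIntegrable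
      (fun t => ∑ s ∈ P, (m s t * (lam - t)^(δ-1)) • a s) volume a₀ b₀ := by
    intro a₀ b₀
    have hh := IntervalIntegrable.sum (μ := volume) (a := a₀) (b := b₀) P
      (f := fun s t => (m s t * (lam - t)^(δ-1)) • a s)
      (fun s hs => hsmulC (fun t => m s t * (lam - t)^(δ-1)) (a s) a₀ b₀ (hIm s hs a₀ b₀))
    rwa [Finset.sum_fn] at hh
  have hIu : ∀ a₀ b₀ : ℝ, IntervalIntegrable u volume a₀ b₀ := by
    intro a₀ b₀
    rw [hudef]
    exact (hIsum a₀ b₀).sub (hsmulC _ A a₀ b₀ (hIA a₀ b₀))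
  -- representation of the finite sum via greedyPartialSum
  have hrep : ∀ t ∈ Set.Ioc (0:ℝ) lam,
      (∑ s ∈ P, m s t • a s) = (t^κ : ℝ) • greedyPartialSum a κ t⁻¹ := by
    intro t ht
    obtain ⟨htpos, htle⟩ := ht
    have htinv : (0:ℝ) < t⁻¹ := inv_pos.2 htpos
    rw [greedyPartialSum, finsum_mem_eq_finite_toFinset_sum _ (hfin t⁻¹ htinv), Finset.smul_sum]
    have hQP : (hfin t⁻¹ htinv).toFinset ⊆ P := by
      intro s hs
      rw [Set.Finite.mem_toFinset] at hs
      rw [hPdef, Set.Finite.mem_toFinset]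
      exact lt_of_le_of_lt (invAnti htpos htle) hs
    rw [← Finset.sum_subset hQP ?_]
    · refine Finset.sum_congr rfl fun s hs => ?_
      rw [Set.Finite.mem_toFinset] at hs
      have habs : 0 < ‖a s‖ := lt_trans htinv hs
      have hμt : μs s < t := invSwap htpos hs
      have hw0 : 0 ≤ 1 - t⁻¹ / ‖a s‖ := by
        rw [sub_nonneg]
        exact (div_le_one habs).2 hs.le
      rw [hmdef]
      simp only
      rw [Set.indicator_of_mem (by exact hμt : t ∈ Set.Ioi (μs s)), smul_smul]
      congr 1
      rw [← Real.mul_rpow htpos.le hw0]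
      congr 1
      rw [hμdef]
      field_simp
    · intro s hsP hsQ
      rw [Set.Finite.mem_toFinset, Set.mem_setOf_eq, not_lt] at hsQ
      have habs : 0 < ‖a s‖ := lt_trans hlinv (hPabs s hsP)
      have hle : t ≤ μs s := by
        have h5 := invAnti habs hsQ
        rw [inv_inv] at h5
        exact h5
      rw [hmdef]
      simp only
      rw [Set.indicator_of_notMem (by simpa using not_lt.2 hle), zero_smul]
  -- per-term integral evaluation
  have hterm : ∀ s ∈ P, (∫ t in (0:ℝ)..lam, m s t * (lam - t)^(δ-1))
      = (lam - μs s)^(κ+δ) * B := by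
    intro s hs
    obtain ⟨hμpos, hμlam⟩ := hPμ s hs
    have hsplit := intervalIntegral.integral_add_adjacent_intervals
      (hIm s hs 0 (μs s)) (hIm s hs (μs s) lam)
    have hzero : (∫ t in (0:ℝ)..(μs s), m s t * (lam - t)^(δ-1)) = 0 := by
      rw [intervalIntegral.integral_congr (g := fun _ => (0:ℝ)) ?_, intervalIntegral.integral_zero]
      intro t ht
      rw [Set.uIcc_of_le hμpos.le] at ht
      rw [hmdef]
      simp only
      rw [Set.indicator_of_notMem (by simpa using not_lt.2 ht.2), zero_mul]
    have hmain : (∫ t in (μs s)..lam, m s t * (lam - t)^(δ-1))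
        = (lam - μs s)^(κ+δ) * B := by
      rw [intervalIntegral.integral_congr_ae
        (g := fun t => (lam - t)^(δ-1) * (t - μs s)^κ) ?_]
      · exact evalBeta δ κ hδ hκ hμlam
      · refine MeasureTheory.ae_of_all _ fun t ht => ?_
        rw [Set.uIoc_of_le hμlam.le] at ht
        rw [hmdef]
        simp only
        rw [Set.indicator_of_mem (by exact ht.1 : t ∈ Set.Ioi (μs s)), mul_comm]
    rw [← hsplit, hzero, hmain, zero_add]
  -- the A-term integral
  have hAterm : (∫ t in (0:ℝ)..lam, t^κ * (lam - t)^(δ-1)) = lam^(κ+δ) * B := by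
    have h := evalBeta δ κ hδ hκ (μ := 0) hlampos
    simp only [sub_zero] at h
    rw [intervalIntegral.integral_congr (g := fun t => (lam - t)^(δ-1) * t^κ)
      (fun t _ => mul_comm _ _), h]
  -- the key identity
  have hid : (∫ t in (0:ℝ)..lam, u t)
      = ((B * lam^(κ+δ)) : ℝ) • (greedyPartialSum a (κ+δ) lam⁻¹ - A) := by
    rw [hudef]
    rw [intervalIntegral.integral_sub (hIsum 0 lam) (hsmulC _ A 0 lam (hIA 0 lam))]
    rw [intervalIntegral.integral_finset_sum (f := fun s t => (m s t * (lam - t)^(δ-1)) • a s)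
      (fun s hs => hsmulC (fun t => m s t * (lam - t)^(δ-1)) (a s) 0 lam (hIm s hs 0 lam))]
    have h1 : ∀ s ∈ P, (∫ t in (0:ℝ)..lam, (m s t * (lam - t)^(δ-1)) • a s)
        = ((lam - μs s)^(κ+δ) * B) • a s := by
      intro s hs
      rw [intervalIntegral.integral_smul_const, hterm s hs]
    rw [Finset.sum_congr rfl h1, intervalIntegral.integral_smul_const, hAterm]
    have h2 : (∑ s ∈ P, ((lam - μs s)^(κ+δ) * B) • a s)
        = ((B * lam^(κ+δ)) : ℝ) • greedyPartialSum a (κ+δ) lam⁻¹ := by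
      rw [greedyPartialSum, finsum_mem_eq_finite_toFinset_sum _ (hfin lam⁻¹ hlinv),
        Finset.smul_sum]
      refine Finset.sum_congr rfl fun s hs => ?_
      have habs : 0 < ‖a s‖ := lt_trans hlinv (hPabs s hs)
      have hw0 : 0 ≤ 1 - lam⁻¹ / ‖a s‖ := by
        rw [sub_nonneg]
        exact (div_le_one habs).2 (hPabs s hs).le
      rw [smul_smul]
      congr 1
      have e1 : lam - μs s = lam * (1 - lam⁻¹ / ‖a s‖) := by
        rw [hμdef]
        field_simp
      rw [e1, Real.mul_rpow hlampos.le hw0]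
      ring
    rw [h2, smul_sub, mul_comm (lam^(κ+δ)) B]
  -- pointwise representation of u on (0, lam]
  have hrepu : ∀ t ∈ Set.Ioc (0:ℝ) lam,
      u t = ((t^κ * (lam - t)^(δ-1)) : ℝ) • (greedyPartialSum a κ t⁻¹ - A) := by
    intro t ht
    rw [hudef]
    simp only
    have e1 : (∑ s ∈ P, (m s t * (lam - t)^(δ-1)) • a s)
        = ((lam - t)^(δ-1) : ℝ) • ∑ s ∈ P, m s t • a s := by
      rw [Finset.smul_sum]
      refine Finset.sum_congr rfl fun s _ => ?_
      rw [smul_smul, mul_comm]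
    rw [e1, hrep t ht, smul_smul, mul_comm ((lam - t)^(δ-1)) (t^κ), smul_sub]
  -- kernel bound
  have hker : ∀ t ∈ Set.Ioc (0:ℝ) T, (lam - t)^(δ-1) ≤ K * lam^(δ-1) := by
    intro t ht
    have ht0 : 0 < t := ht.1
    have htT : t ≤ T := ht.2
    rcases le_or_gt 1 δ with h1 | h1
    · have : (lam - t)^(δ-1) ≤ lam^(δ-1) :=
        Real.rpow_le_rpow (by linarith) (by linarith) (by linarith)
      have h2 : 0 ≤ lam^(δ-1) := Real.rpow_nonneg hlampos.le _
      nlinarith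
    · have h2 : lam/2 ≤ lam - t := by linarith
      have h3 : (lam - t)^(δ-1) ≤ (lam/2)^(δ-1) :=
        Real.rpow_le_rpow_of_nonpos (by linarith) h2 (by linarith)
      have h4 : (lam/2)^(δ-1) = lam^(δ-1) * (2:ℝ)^(1-δ) := by
        rw [Real.div_rpow hlampos.le (by norm_num), show (1-δ) = -(δ-1) by ring,
          Real.rpow_neg (by norm_num)]
        ring
      have h5 : (2:ℝ)^(1-δ) ≤ K := le_max_right _ _
      have h6 : 0 ≤ lam^(δ-1) := Real.rpow_nonneg hlampos.le _
      nlinarith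
  -- bound on ‖g t - A‖ for small t
  have hgsmall : ∀ t ∈ Set.Ioc (0:ℝ) T, ‖greedyPartialSum a κ t⁻¹ - A‖ ≤ M := by
    intro t ht
    have h1 : T⁻¹ ≤ t⁻¹ := invAnti ht.1 ht.2
    have h2 := normGreedyLe a hfin κ hκ (inv_pos.2 hT) h1
    calc ‖greedyPartialSum a κ t⁻¹ - A‖ ≤ ‖greedyPartialSum a κ t⁻¹‖ + ‖A‖ := norm_sub_le _ _
      _ ≤ Sig0 + ‖A‖ := by rw [hSigdef]; linarith
      _ = M := hMdef.symm
  -- head bound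
  have hhead : ‖∫ t in (0:ℝ)..T, u t‖ ≤ (K * lam^(δ-1) * (T^κ * M)) * T := by
    have h := intervalIntegral.norm_integral_le_of_norm_le_const
      (C := K * lam^(δ-1) * (T^κ * M)) (f := u) (a := (0:ℝ)) (b := T) ?_
    · calc ‖∫ t in (0:ℝ)..T, u t‖ ≤ K * lam^(δ-1) * (T^κ * M) * |T - 0| := h
        _ = (K * lam^(δ-1) * (T^κ * M)) * T := by rw [sub_zero, abs_of_pos hT]
    · intro t ht
      rw [Set.uIoc_of_le hT.le] at ht
      have htlam : t ∈ Set.Ioc (0:ℝ) lam := ⟨ht.1, le_trans ht.2 (by linarith)⟩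
      rw [hrepu t htlam, norm_smul, Real.norm_eq_abs,
        abs_of_nonneg (mul_nonneg (Real.rpow_nonneg ht.1.le _)
          (Real.rpow_nonneg (by linarith [htlam.2] : (0:ℝ) ≤ lam - t) _))]
      have b1 : t^κ ≤ T^κ := Real.rpow_le_rpow ht.1.le ht.2 hκ
      have b2 : (lam - t)^(δ-1) ≤ K * lam^(δ-1) := hker t ht
      have b3 : ‖greedyPartialSum a κ t⁻¹ - A‖ ≤ M := hgsmall t ht
      have n1 : (0:ℝ) ≤ t^κ := Real.rpow_nonneg ht.1.le _
      have n2 : (0:ℝ) ≤ (lam - t)^(δ-1) :=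
        Real.rpow_nonneg (by linarith [htlam.2] : (0:ℝ) ≤ lam - t) _
      have n3 : (0:ℝ) ≤ ‖greedyPartialSum a κ t⁻¹ - A‖ := norm_nonneg _
      have n4 : (0:ℝ) ≤ K * lam^(δ-1) :=
        mul_nonneg hKpos.le (Real.rpow_nonneg hlampos.le _)
      have n5 : (0:ℝ) ≤ T^κ := Real.rpow_nonneg hT.le _
      calc t^κ * (lam - t)^(δ-1) * ‖greedyPartialSum a κ t⁻¹ - A‖
          ≤ T^κ * (K * lam^(δ-1)) * M := by
            apply mul_le_mul (mul_le_mul b1 b2 n2 n5) b3 n3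
            positivity
        _ = K * lam^(δ-1) * (T^κ * M) := by ring
  -- tail bound
  have hknonneg : ∀ t ∈ Set.Icc (0:ℝ) lam, 0 ≤ t^κ * (lam - t)^(δ-1) := by
    intro t ht
    exact mul_nonneg (Real.rpow_nonneg ht.1 _)
      (Real.rpow_nonneg (by linarith [ht.2] : (0:ℝ) ≤ lam - t) _)
  have htail : ‖∫ t in T..lam, u t‖ ≤ lam^(κ+δ) * B * εh := by
    have h := intervalIntegral.norm_integral_le_of_norm_le (f := u) (a := T) (b := lam)
      (g := fun t => (t^κ * (lam - t)^(δ-1)) * εh) hTlam.le ?_ ((hIA T lam).mul_const εh)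
    · refine h.trans ?_
      have hsplit := intervalIntegral.integral_add_adjacent_intervals
        ((hIA 0 T).mul_const εh) ((hIA T lam).mul_const εh)
      have e0 : (∫ t in (0:ℝ)..lam, (t^κ * (lam - t)^(δ-1)) * εh) = lam^(κ+δ) * B * εh := by
        rw [intervalIntegral.integral_mul_const, hAterm]
      have e1 : 0 ≤ ∫ t in (0:ℝ)..T, (t^κ * (lam - t)^(δ-1)) * εh := by
        apply intervalIntegral.integral_nonneg hT.le
        intro t ht
        exact mul_nonneg (hknonneg t ⟨ht.1, le_trans ht.2 (by linarith)⟩) hεh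
      have e2 : 0 ≤ ∫ t in T..lam, (t^κ * (lam - t)^(δ-1)) * εh := by
        apply intervalIntegral.integral_nonneg hTlam.le
        intro t ht
        exact mul_nonneg (hknonneg t ⟨le_trans hT.le ht.1, ht.2⟩) hεh
      rw [e0] at hsplit
      linarith
    · refine MeasureTheory.ae_of_all _ fun t ht => ?_
      have htlam : t ∈ Set.Ioc (0:ℝ) lam := ⟨lt_of_lt_of_le hT ht.1.le, ht.2⟩
      rw [hrepu t htlam, norm_smul, Real.norm_eq_abs,
        abs_of_nonneg (hknonneg t ⟨htlam.1.le, htlam.2⟩)]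
      exact mul_le_mul_of_nonneg_left (hnear t ht.1.le) (hknonneg t ⟨htlam.1.le, htlam.2⟩)
  -- combine
  have hBL : (0:ℝ) < B * lam^(κ+δ) := mul_pos hB (Real.rpow_pos_of_pos hlampos _)
  have hcomb : B * lam^(κ+δ) * ‖greedyPartialSum a (κ+δ) lam⁻¹ - A‖
      ≤ (K * lam^(δ-1) * (T^κ * M)) * T + lam^(κ+δ) * B * εh := by
    have hsplit := intervalIntegral.integral_add_adjacent_intervals (hIu 0 T) (hIu T lam)
    have h1 : ‖∫ t in (0:ℝ)..lam, u t‖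
        = B * lam^(κ+δ) * ‖greedyPartialSum a (κ+δ) lam⁻¹ - A‖ := by
      rw [hid, norm_smul, Real.norm_eq_abs, abs_of_pos hBL]
    rw [← h1, ← hsplit]
    calc ‖(∫ t in (0:ℝ)..T, u t) + ∫ t in T..lam, u t‖
        ≤ ‖∫ t in (0:ℝ)..T, u t‖ + ‖∫ t in T..lam, u t‖ := norm_add_le _ _
      _ ≤ (K * lam^(δ-1) * (T^κ * M)) * T + lam^(κ+δ) * B * εh := add_le_add hhead htail
  -- divide
  rw [div_add' _ _ _ hBL.ne']
  rw [le_div_iff₀ hBL]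
  calc ‖greedyPartialSum a (κ+δ) lam⁻¹ - A‖ * (B * lam^(κ+δ))
      = B * lam^(κ+δ) * ‖greedyPartialSum a (κ+δ) lam⁻¹ - A‖ := by ring
    _ ≤ (K * lam^(δ-1) * (T^κ * M)) * T + lam^(κ+δ) * B * εh := hcomb
    _ = K * (T^κ * M * T) * lam^(δ-1) + εh * (B * lam^(κ+δ)) := by ring


end estimate

/-- Consistency theorem for greedy κ-sums: if a family with finite level sets has
greedy `κ`-sum `A`, then it has greedy `κ'`-sum `A` for every `κ' ≥ κ`. -/
theorem greedySum_consistency {S : Type*} (a : S → ℂ)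
    (hfin : ∀ ε > (0 : ℝ), {s | ε < ‖a s‖}.Finite)
    (κ κ' : ℝ) (hκ : 0 ≤ κ) (hκκ' : κ ≤ κ') (A : ℂ)
    (h : HasGreedySum a κ A) :
    HasGreedySum a κ' A := by
  rcases eq_or_lt_of_le hκκ' with heq | hlt
  · rwa [← heq]
  set δ : ℝ := κ' - κ with hδdef
  have hδ : 0 < δ := sub_pos.2 hlt
  have hκ' : κ + δ = κ' := by rw [hδdef]; ring
  have hg : Tendsto (fun t : ℝ => greedyPartialSum a κ t⁻¹) atTop (𝓝 A) :=
    h.comp tendsto_inv_atTop_nhdsGT_zero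
  set B : ℝ := ∫ u in (0:ℝ)..1, (1-u)^(δ-1) * u^κ with hBdef
  have hB : 0 < B := betaPos δ κ hδ hκ
  have key : Tendsto (fun lam : ℝ => greedyPartialSum a (κ+δ) lam⁻¹) atTop (𝓝 A) := by
    rw [Metric.tendsto_atTop]
    intro ε hε
    obtain ⟨T₀, hT₀⟩ := Metric.tendsto_atTop.1 hg (ε/3) (by linarith)
    set T : ℝ := max T₀ 1 with hTdef
    have hT : 0 < T := lt_of_lt_of_le one_pos (le_max_right _ _)
    have hnear : ∀ t : ℝ, T ≤ t → ‖greedyPartialSum a κ t⁻¹ - A‖ ≤ ε/3 := by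
      intro t ht
      have h1 := hT₀ t (le_trans (le_max_left _ _) ht)
      rw [dist_eq_norm] at h1
      linarith
    set C : ℝ := max 1 ((2:ℝ)^(1-δ)) * ((T^κ *
        ((∑ s ∈ (hfin T⁻¹ (inv_pos.2 hT)).toFinset, ‖a s‖) + ‖A‖)) * T) with hCdef
    have hhead : Tendsto (fun lam : ℝ => C * lam^(δ-1) / (B * lam^(κ+δ))) atTop (𝓝 0) := by
      have h1 : Tendsto (fun lam : ℝ => lam ^ (-(κ+1))) atTop (𝓝 (0:ℝ)) :=
        tendsto_rpow_neg_atTop (by linarith)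
      have h2 := h1.const_mul (C / B)
      rw [mul_zero] at h2
      refine h2.congr' ?_
      filter_upwards [eventually_gt_atTop (0:ℝ)] with lam hlam
      have e : lam ^ (-(κ+1)) = lam^(δ-1) / lam^(κ+δ) := by
        rw [← Real.rpow_sub hlam]
        congr 1
        ring
      rw [e, div_mul_div_comm]
    obtain ⟨N₁, hN₁⟩ := Metric.tendsto_atTop.1 hhead (ε/3) (by linarith)
    refine ⟨max N₁ (2*T), fun lam hlam => ?_⟩
    have hlamN : N₁ ≤ lam := le_trans (le_max_left _ _) hlam
    have hlam2 : 2*T ≤ lam := le_trans (le_max_right _ _) hlam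
    have hest : ‖greedyPartialSum a (κ+δ) lam⁻¹ - A‖ ≤
        C * lam^(δ-1) / (B * lam^(κ+δ)) + ε/3 :=
      mainEstimate a hfin κ δ hκ hδ A (ε/3) (by linarith) T lam hT hlam2 hnear
    have h3 := hN₁ lam hlamN
    rw [dist_eq_norm, sub_zero] at h3
    have h4 : C * lam^(δ-1) / (B * lam^(κ+δ)) < ε/3 :=
      lt_of_le_of_lt (le_abs_self _) (by rwa [Real.norm_eq_abs] at h3)
    rw [dist_eq_norm]
    calc ‖greedyPartialSum a (κ+δ) lam⁻¹ - A‖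
        ≤ C * lam^(δ-1) / (B * lam^(κ+δ)) + ε/3 := hest
      _ < ε/3 + ε/3 := by linarith
      _ < ε := by linarith
  have key2 : Tendsto (fun ε : ℝ => greedyPartialSum a (κ+δ) (ε⁻¹)⁻¹) (𝓝[>] (0:ℝ)) (𝓝 A) :=
    key.comp tendsto_inv_nhdsGT_zero
  have hfinal : HasGreedySum a (κ+δ) A := by
    rw [HasGreedySum]
    refine Tendsto.congr' ?_ key2
    filter_upwards [self_mem_nhdsWithin] with x hx
    rw [inv_inv]
  rwa [hκ'] at hfinal
end

section
/- Non-summability of products of greedy summable arrays: There exist index sets S and T and families of complex numbers (a_s)_{s∈S} and (b_t)_{t∈T}, each with finite level sets {s : |a_s| > ε} and {t : |b_t| > ε} for every ε > 0 and each possessing a greedy sum, such that the product family (a_s · b_t)_{(s,t)∈S×T} does not possess a greedy sum. -/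
open Filter Topology

open Finset

noncomputable section GS

def xx (k : ℕ) : ℝ := (-1)^k / (2 * Real.sqrt (k+1))
def yy (k : ℕ) : ℝ := Real.sqrt (1 - xx k ^ 2)
def aa : ℕ × ℕ → ℂ := fun p =>
  if p.2 < 2^(p.1+1) then (((2:ℝ)^p.1)⁻¹ : ℝ) * (xx p.1 + (-1)^p.2 * yy p.1 * Complex.I) else 0
def AA (k : ℕ) : ℝ := (-1)^k / Real.sqrt (k+1)

lemma sqrt_pos' (k : ℕ) : 0 < Real.sqrt (k+1) := Real.sqrt_pos.2 (by positivity)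

lemma one_le_sqrt' (k : ℕ) : 1 ≤ Real.sqrt (k+1) :=
  Real.one_le_sqrt.2 (by push_cast; linarith)

lemma xx_sq_le (k : ℕ) : xx k ^ 2 ≤ 1 := by
  have h1 := one_le_sqrt' k
  have : |xx k| ≤ 1 := by
    rw [xx, abs_div, abs_pow, abs_neg, abs_one, one_pow,
      div_le_one (by positivity), abs_of_pos (by positivity)]
    linarith
  nlinarith [abs_nonneg (xx k), sq_abs (xx k)]

lemma unit_circ (k : ℕ) : xx k ^ 2 + yy k ^ 2 = 1 := by
  rw [yy, Real.sq_sqrt (by nlinarith [xx_sq_le k])]; ring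

lemma abs_aa (p : ℕ × ℕ) :
    ‖aa p‖ = if p.2 < 2^(p.1+1) then ((2:ℝ)^p.1)⁻¹ else 0 := by
  rw [aa]
  split_ifs with h
  · rw [norm_mul]
    have h2 : ‖(xx p.1 : ℂ) + (-1:ℂ)^p.2 * (yy p.1) * Complex.I‖ = 1 := by
      rcases Nat.even_or_odd p.2 with he | ho
      · rw [he.neg_one_pow,
          show ((1:ℂ) * (yy p.1) * Complex.I) = (yy p.1 : ℂ) * Complex.I by ring,
          Complex.norm_def, Complex.normSq_add_mul_I, unit_circ]
        exact Real.sqrt_one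
      · rw [ho.neg_one_pow,
          show ((-1:ℂ) * (yy p.1) * Complex.I) = ((-(yy p.1) : ℝ) : ℂ) * Complex.I by push_cast; ring,
          Complex.norm_def, Complex.normSq_add_mul_I, neg_sq, unit_circ]
        exact Real.sqrt_one
    rw [h2, mul_one, Complex.norm_real, Real.norm_eq_abs, abs_of_pos (by positivity)]
  · simp

lemma sum_neg_one_pow_even (M : ℕ) (hM : Even M) : ∑ j ∈ range M, ((-1:ℂ))^j = 0 := by
  rw [neg_one_geom_sum]
  simp [hM]

lemma sumA (k : ℕ) : ∑ j ∈ range (2^(k+1)), aa (k, j) = (AA k : ℂ) := by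
  have hlt : ∀ j ∈ range (2^(k+1)), aa (k, j)
      = ((((2:ℝ)^k)⁻¹ : ℝ) : ℂ) * (xx k + (-1)^j * yy k * Complex.I) := by
    intro j hj
    rw [aa]
    simp only [Finset.mem_range] at hj
    simp [hj]
  rw [Finset.sum_congr rfl hlt, ← Finset.mul_sum]
  have hsum : ∑ j ∈ range (2^(k+1)), ((xx k : ℂ) + (-1:ℂ)^j * yy k * Complex.I)
      = ((2^(k+1) : ℕ) : ℂ) * xx k := by
    rw [Finset.sum_add_distrib, Finset.sum_const, nsmul_eq_mul]
    have : ∀ j, ((-1:ℂ))^j * (yy k) * Complex.I = ((-1:ℂ))^j * ((yy k) * Complex.I) := by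
      intro j; ring
    rw [Finset.sum_congr rfl (fun j _ => this j), ← Finset.sum_mul,
      sum_neg_one_pow_even _ (by simp [pow_succ, even_two_mul]), zero_mul, add_zero, Finset.card_range]
  rw [hsum, AA, xx]
  have h2 : ((2:ℂ)^k) ≠ 0 := pow_ne_zero _ two_ne_zero
  have h3 : (Real.sqrt (k+1) : ℂ) ≠ 0 := by
    simpa using (sqrt_pos' k).ne'
  push_cast
  rw [pow_succ]
  field_simp




lemma exK (ε : ℝ) (hε : 0 < ε) : ∃ n : ℕ, ((2:ℝ)^n)⁻¹ ≤ ε := by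
  obtain ⟨n, hn⟩ := pow_unbounded_of_one_lt ε⁻¹ (one_lt_two (α := ℝ))
  exact ⟨n, le_of_lt ((inv_lt_comm₀ hε (by positivity : (0:ℝ) < 2^n)).1 hn)⟩

def KK (ε : ℝ) : ℕ := if h : 0 < ε then Nat.find (exK ε h) else 0

lemma KK_iff {ε : ℝ} (hε : 0 < ε) (n : ℕ) : n < KK ε ↔ ε < ((2:ℝ)^n)⁻¹ := by
  rw [KK, dif_pos hε]
  constructor
  · intro h
    have := Nat.find_min (exK ε hε) h
    push_neg at this
    exact this
  · intro h
    by_contra h'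
    push_neg at h'
    have spec := Nat.find_spec (exK ε hε)
    have : ((2:ℝ)^n)⁻¹ ≤ ((2:ℝ)^(Nat.find (exK ε hε)))⁻¹ := by
      apply inv_anti₀ (by positivity)
      exact pow_le_pow_right₀ one_le_two h'
    linarith
  
lemma KK_pow (L : ℕ) : KK (((2:ℝ)^L)⁻¹) = L := by
  have hpos : (0:ℝ) < ((2:ℝ)^L)⁻¹ := by positivity
  refine le_antisymm ?_ ?_
  · by_contra h
    push_neg at h
    exact absurd ((KK_iff hpos L).1 h) (lt_irrefl _)
  · by_contra h
    push_neg at h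
    have h2 : ((2:ℝ)^L)⁻¹ < ((2:ℝ)^(KK (((2:ℝ)^L)⁻¹)))⁻¹ := by
      apply inv_strictAnti₀ (by positivity)
      exact pow_lt_pow_right₀ one_lt_two h
    exact absurd ((KK_iff hpos _).2 h2) (lt_irrefl _)

lemma tendsto_KK : Tendsto KK (𝓝[>] (0:ℝ)) atTop := by
  rw [tendsto_atTop]
  intro N
  filter_upwards [Ioo_mem_nhdsGT_of_mem (by constructor <;> [exact le_refl (0:ℝ); positivity] :
    (0:ℝ) ∈ Set.Ico 0 ((2:ℝ)^N)⁻¹)] with ε hε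
  exact le_of_lt ((KK_iff hε.1 N).2 hε.2)

lemma gps_eq_sum {α : Type*} (f : α → ℂ) (ε : ℝ) (R : Finset α)
    (hR : ∀ s, ε < ‖f s‖ → s ∈ R) :
    greedyPartialSum f 0 ε = ∑ s ∈ R.filter (fun s => ε < ‖f s‖), f s := by
  unfold greedyPartialSum
  have h1 : ∀ s ∈ {s | ε < ‖f s‖},
      (((1 - ε / ‖f s‖) ^ (0:ℝ) : ℝ)) • f s = f s := fun s _ => by
    simp [Real.rpow_zero]
  rw [finsum_mem_congr rfl h1]
  have h2 : {s | ε < ‖f s‖} = ↑(R.filter (fun s => ε < ‖f s‖)) := by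
    ext s
    simp only [Set.mem_setOf_eq, Finset.coe_filter, Set.mem_setOf_eq]
    exact ⟨fun h => ⟨hR s h, h⟩, fun h => h.2⟩
  rw [h2, finsum_mem_coe_finset]



lemma aa_ne_zero {p : ℕ × ℕ} (h : aa p ≠ 0) : p.2 < 2^(p.1+1) ∧ ‖aa p‖ = ((2:ℝ)^p.1)⁻¹ := by
  have := abs_aa p
  by_cases hj : p.2 < 2^(p.1+1)
  · exact ⟨hj, by rwa [if_pos hj] at this⟩
  · exact absurd (by rw [aa, if_neg hj]) h

lemma sum_aa_full {k K : ℕ} (hk : k < K) : ∑ j ∈ range (2^K), aa (k, j) = (AA k : ℂ) := by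
  rw [← sumA k]
  apply (Finset.sum_subset (Finset.range_subset_range.2 (Nat.pow_le_pow_right (by norm_num) hk)) ?_).symm
  intro j _ hj
  rw [Finset.mem_range, not_lt] at hj
  show aa (k, j) = 0
  rw [aa, if_neg (by simpa using not_lt.2 hj)]

lemma gps_aa {ε : ℝ} (hε : 0 < ε) :
    greedyPartialSum aa 0 ε = ∑ k ∈ range (KK ε), (AA k : ℂ) := by
  set K := KK ε with hK
  have hsub : ∀ k, k < K → 2^(k+1) ≤ 2^K := fun k hk =>
    Nat.pow_le_pow_right (by norm_num) hk
  have hR : ∀ p, ε < ‖aa p‖ → p ∈ (range K ×ˢ range (2^K)) := by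
    intro p hp
    have hne : aa p ≠ 0 := by
      intro h0; rw [h0] at hp; simp at hp; linarith
    obtain ⟨hj, habs⟩ := aa_ne_zero hne
    rw [habs] at hp
    have hk : p.1 < K := (KK_iff hε p.1).2 hp
    exact Finset.mem_product.2 ⟨Finset.mem_range.2 hk,
      Finset.mem_range.2 (lt_of_lt_of_le hj (hsub _ hk))⟩
  rw [gps_eq_sum aa ε _ hR]
  rw [Finset.sum_filter_of_ne]
  · rw [Finset.sum_product]
    apply Finset.sum_congr rfl
    intro k hk
    rw [Finset.mem_range] at hk
    exact sum_aa_full hk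
  · intro p hp hne
    obtain ⟨hj, habs⟩ := aa_ne_zero hne
    rw [habs]
    rw [Finset.mem_product, Finset.mem_range] at hp
    exact (KK_iff hε p.1).1 hp.1



lemma triangle_sum (K : ℕ) (c : ℕ → ℂ) :
    ∑ k ∈ range K, ∑ l ∈ range K, (if k + l < K then (1:ℂ) else 0) * (c k * c l)
      = ∑ n ∈ range K, ∑ x ∈ Finset.HasAntidiagonal.antidiagonal n, c x.1 * c x.2 := by
  rw [← Finset.sum_product']
  have h1 : ∀ x ∈ range K ×ˢ range K,
      (if x.1 + x.2 < K then (1:ℂ) else 0) * (c x.1 * c x.2)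
        = if x.1 + x.2 < K then c x.1 * c x.2 else 0 := by
    intro x _; split_ifs <;> simp
  rw [Finset.sum_congr rfl h1, ← Finset.sum_filter]
  rw [← Finset.sum_biUnion]
  · apply Finset.sum_congr _ (fun x _ => rfl)
    ext x
    simp only [Finset.mem_filter, Finset.mem_product, Finset.mem_range, Finset.mem_biUnion,
      Finset.HasAntidiagonal.mem_antidiagonal]
    constructor
    · rintro ⟨⟨h1, h2⟩, h3⟩; exact ⟨x.1 + x.2, h3, rfl⟩
    · rintro ⟨n, hn, rfl⟩; omega
  · intro m _ n _ hmn
    simp only [Finset.disjoint_left, Finset.HasAntidiagonal.mem_antidiagonal]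
    intro x hx hx'
    exact hmn (hx ▸ hx')

def DD (n : ℕ) : ℂ := ∑ x ∈ Finset.HasAntidiagonal.antidiagonal n, (AA x.1 : ℂ) * (AA x.2 : ℂ)

lemma DD_abs (n : ℕ) : 1 ≤ ‖DD n‖ := by
  have key : DD n = (((-1:ℝ)^n * ∑ x ∈ Finset.HasAntidiagonal.antidiagonal n,
      1 / (Real.sqrt (x.1+1) * Real.sqrt (x.2+1)) : ℝ) : ℂ) := by
    rw [DD]; simp only [AA]
    push_cast
    rw [Finset.mul_sum]
    apply Finset.sum_congr rfl
    intro x hx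
    rw [Finset.HasAntidiagonal.mem_antidiagonal] at hx
    rw [← hx, pow_add]
    push_cast
    ring
  have hterm : ∀ x ∈ Finset.HasAntidiagonal.antidiagonal n,
      (1 / (n+1) : ℝ) ≤ 1 / (Real.sqrt (x.1+1) * Real.sqrt (x.2+1)) := by
    intro x hx
    rw [Finset.HasAntidiagonal.mem_antidiagonal] at hx
    rw [← Real.sqrt_mul (by positivity)]
    have h1 : ((x.1:ℝ)+1) * ((x.2:ℝ)+1) ≤ ((n:ℝ)+1)^2 := by
      have : (x.1:ℝ) ≤ n := by exact_mod_cast Nat.le.intro hx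
      have : (x.2:ℝ) ≤ n := by
        exact_mod_cast Nat.le.intro (by omega : x.2 + x.1 = n)
      nlinarith [Nat.cast_nonneg (α := ℝ) x.1, Nat.cast_nonneg (α := ℝ) x.2]
    apply one_div_le_one_div_of_le (by positivity)
    calc Real.sqrt (((x.1:ℝ)+1) * ((x.2:ℝ)+1)) ≤ Real.sqrt (((n:ℝ)+1)^2) :=
          Real.sqrt_le_sqrt h1
      _ = (n:ℝ)+1 := Real.sqrt_sq (by positivity)
  have hsum : (1:ℝ) ≤ ∑ x ∈ Finset.HasAntidiagonal.antidiagonal n, 1 / (Real.sqrt (x.1+1) * Real.sqrt (x.2+1)) := by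
    calc (1:ℝ) = ∑ _x ∈ Finset.HasAntidiagonal.antidiagonal n, (1/(n+1) : ℝ) := by
          rw [Finset.sum_const, Finset.Nat.card_antidiagonal, nsmul_eq_mul]
          push_cast
          field_simp
      _ ≤ _ := Finset.sum_le_sum hterm
  rw [key, Complex.norm_real, Real.norm_eq_abs, abs_mul, abs_pow, abs_neg, abs_one, one_pow, one_mul,
    abs_of_nonneg (by linarith)]
  exact hsum



def gg : (ℕ × ℕ) × (ℕ × ℕ) → ℂ := fun q => aa q.1 * aa q.2

lemma gps_gg {ε : ℝ} (hε : 0 < ε) :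
    greedyPartialSum gg 0 ε = ∑ n ∈ range (KK ε), DD n := by
  set K := KK ε with hKdef
  have hsub : ∀ k, k < K → 2^(k+1) ≤ 2^K := fun k hk =>
    Nat.pow_le_pow_right (by norm_num) hk
  set R : Finset (ℕ × ℕ) := range K ×ˢ range (2^K) with hRdef
  -- facts about nonzero products
  have habs : ∀ q : (ℕ × ℕ) × (ℕ × ℕ), gg q ≠ 0 →
      ‖gg q‖ = ((2:ℝ)^(q.1.1 + q.2.1))⁻¹ ∧ q.1.2 < 2^(q.1.1+1) ∧ q.2.2 < 2^(q.2.1+1) := by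
    intro q hq
    have h1 : aa q.1 ≠ 0 := fun h => hq (by rw [gg, h, zero_mul])
    have h2 : aa q.2 ≠ 0 := fun h => hq (by rw [gg, h, mul_zero])
    obtain ⟨hj1, he1⟩ := aa_ne_zero h1
    obtain ⟨hj2, he2⟩ := aa_ne_zero h2
    refine ⟨?_, hj1, hj2⟩
    rw [gg, norm_mul, he1, he2, pow_add, mul_inv]
  have hR₂ : ∀ q, ε < ‖gg q‖ → q ∈ R ×ˢ R := by
    intro q hq
    have hne : gg q ≠ 0 := by
      intro h0; rw [h0] at hq; simp at hq; linarith
    obtain ⟨he, hj1, hj2⟩ := habs q hne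
    rw [he] at hq
    have hkl : q.1.1 + q.2.1 < K := (KK_iff hε _).2 hq
    have hk1 : q.1.1 < K := by omega
    have hk2 : q.2.1 < K := by omega
    refine Finset.mem_product.2 ⟨Finset.mem_product.2 ⟨?_, ?_⟩, Finset.mem_product.2 ⟨?_, ?_⟩⟩ <;>
      rw [Finset.mem_range]
    · exact hk1
    · exact lt_of_lt_of_le hj1 (hsub _ hk1)
    · exact hk2
    · exact lt_of_lt_of_le hj2 (hsub _ hk2)
  rw [gps_eq_sum gg ε _ hR₂, Finset.sum_filter]
  have hfix : ∀ q ∈ R ×ˢ R, (if ε < ‖gg q‖ then gg q else 0)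
      = (if q.1.1 + q.2.1 < K then (1:ℂ) else 0) * gg q := by
    intro q _
    by_cases hq : gg q = 0
    · rw [hq]; simp
    · obtain ⟨he, _, _⟩ := habs q hq
      rw [he]
      have : ε < ((2:ℝ)^(q.1.1 + q.2.1))⁻¹ ↔ q.1.1 + q.2.1 < K := (KK_iff hε _).symm
      split_ifs with h1 h2 h2
      · rw [one_mul]
      · exact absurd (this.1 h1) h2
      · exact absurd (this.2 h2) h1
      · rw [zero_mul]
  rw [Finset.sum_congr rfl hfix]
  -- now expand the product structure
  have step1 : ∑ q ∈ R ×ˢ R, (if q.1.1 + q.2.1 < K then (1:ℂ) else 0) * gg q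
      = ∑ k ∈ range K, ∑ l ∈ range K,
          (if k + l < K then (1:ℂ) else 0) *
            ((∑ j ∈ range (2^K), aa (k, j)) * (∑ i ∈ range (2^K), aa (l, i))) := by
    rw [Finset.sum_product]
    rw [hRdef]
    rw [Finset.sum_product]
    apply Finset.sum_congr rfl
    intro k _
    rw [Finset.sum_comm, Finset.sum_product]
    apply Finset.sum_congr rfl
    intro l _
    simp only [gg]
    conv_rhs => rw [Finset.mul_sum, Finset.mul_sum]
    apply Finset.sum_congr rfl
    intro i _
    conv_rhs => rw [Finset.sum_mul, Finset.mul_sum]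
  rw [step1]
  have step2 : ∀ k ∈ range K, ∀ l ∈ range K,
      (if k + l < K then (1:ℂ) else 0) *
        ((∑ j ∈ range (2^K), aa (k, j)) * (∑ i ∈ range (2^K), aa (l, i)))
      = (if k + l < K then (1:ℂ) else 0) * ((AA k : ℂ) * (AA l : ℂ)) := by
    intro k hk l hl
    rw [Finset.mem_range] at hk hl
    rw [sum_aa_full hk, sum_aa_full hl]
  rw [Finset.sum_congr rfl (fun k hk => Finset.sum_congr rfl (step2 k hk))]
  rw [triangle_sum K (fun k => (AA k : ℂ))]
  simp only [DD]

lemma level_finite {ε : ℝ} (hε : 0 < ε) : {p | ε < ‖aa p‖}.Finite := by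
  apply Set.Finite.subset (Finset.finite_toSet (range (KK ε) ×ˢ range (2^(KK ε))))
  intro p hp
  simp only [Set.mem_setOf_eq] at hp
  have hne : aa p ≠ 0 := by
    intro h0; rw [h0] at hp; simp at hp; linarith
  obtain ⟨hj, habs⟩ := aa_ne_zero hne
  rw [habs] at hp
  have hk : p.1 < KK ε := (KK_iff hε p.1).2 hp
  simp only [Finset.coe_product, Set.mem_prod, Finset.mem_coe, Finset.mem_range]
  exact ⟨hk, lt_of_lt_of_le hj (Nat.pow_le_pow_right (by norm_num) hk)⟩

lemma hasA : ∃ A : ℂ, Tendsto (greedyPartialSum aa 0) (𝓝[>] (0:ℝ)) (𝓝 A) := by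
  have hant : Antitone (fun k : ℕ => 1 / Real.sqrt (k+1)) := by
    intro m n h
    apply one_div_le_one_div_of_le (sqrt_pos' m)
    exact Real.sqrt_le_sqrt (by push_cast; exact add_le_add_left (Nat.cast_le.2 h) 1)
  have h0 : Tendsto (fun k : ℕ => 1 / Real.sqrt (k+1)) atTop (𝓝 0) := by
    have h1 : Tendsto (fun k : ℕ => Real.sqrt (k+1)) atTop atTop := by
      apply tendsto_atTop_atTop.2
      intro b
      refine ⟨⌈b^2⌉₊, fun k hk => ?_⟩
      rcases le_or_gt b 0 with hb | hb
      · exact hb.trans (Real.sqrt_nonneg _)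
      · rw [← Real.sqrt_sq hb.le]
        apply Real.sqrt_le_sqrt
        have h2 : (b:ℝ)^2 ≤ (⌈b^2⌉₊ : ℝ) := Nat.le_ceil _
        have h3 : ((⌈b^2⌉₊ : ℕ) : ℝ) ≤ (k : ℝ) := Nat.cast_le.2 hk
        linarith
    simpa [one_div, Pi.inv_def] using h1.inv_tendsto_atTop
  obtain ⟨l, hl⟩ := hant.tendsto_alternating_series_of_tendsto_zero h0
  refine ⟨(l : ℂ), ?_⟩
  have hC : Tendsto (fun n => ∑ k ∈ range n, (AA k : ℂ)) atTop (𝓝 (l:ℂ)) := by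
    have h2 := (Complex.continuous_ofReal.tendsto l).comp hl
    apply h2.congr
    intro n
    simp only [Function.comp_apply]
    push_cast
    apply Finset.sum_congr rfl
    intro k _
    simp only [AA]
    push_cast
    rw [mul_one_div]
  have final := hC.comp tendsto_KK
  apply final.congr'
  filter_upwards [self_mem_nhdsWithin] with ε hε
  exact (gps_aa hε).symm

lemma noC : ¬ ∃ C : ℂ, Tendsto (greedyPartialSum gg 0) (𝓝[>] (0:ℝ)) (𝓝 C) := by
  rintro ⟨C, hC⟩
  have hεt : Tendsto (fun L : ℕ => ((2:ℝ)^L)⁻¹) atTop (𝓝[>] (0:ℝ)) := by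
    apply tendsto_nhdsWithin_of_tendsto_nhds_of_eventually_within
    · simpa [inv_pow] using
        tendsto_pow_atTop_nhds_zero_of_lt_one (by norm_num : (0:ℝ) ≤ 2⁻¹) (by norm_num : (2:ℝ)⁻¹ < 1)
    · filter_upwards with L
      simp only [Set.mem_Ioi]
      positivity
  have hQ : Tendsto (fun L : ℕ => ∑ n ∈ range L, DD n) atTop (𝓝 C) := by
    have h2 := hC.comp hεt
    apply h2.congr
    intro L
    show greedyPartialSum gg 0 (((2:ℝ)^L)⁻¹) = _
    rw [gps_gg (by positivity), KK_pow]
  have hQ1 : Tendsto (fun L : ℕ => ∑ n ∈ range (L+1), DD n) atTop (𝓝 C) := by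
    have := hQ.comp (tendsto_add_atTop_nat 1)
    exact this
  have hdiff : Tendsto (fun L : ℕ => DD L) atTop (𝓝 0) := by
    have h3 := hQ1.sub hQ
    rw [sub_self] at h3
    apply h3.congr
    intro L
    rw [Finset.sum_range_succ]
    ring
  have h4 : Tendsto (fun L : ℕ => ‖DD L‖) atTop (𝓝 0) := by
    simpa using hdiff.norm
  have h5 : ∀ᶠ L in atTop, ‖DD L‖ < 1 :=
    h4.eventually_lt_const (by norm_num)
  obtain ⟨L, hL⟩ := h5.exists
  exact absurd (DD_abs L) (not_le.2 hL)



end GS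

/-- There exist greedy summable families (with finite level sets) whose product
family is not greedy summable. -/
theorem exists_greedySummable_product_not_greedySummable :
    ∃ (S T : Type) (a : S → ℂ) (b : T → ℂ),
      (∀ ε > (0 : ℝ), {s | ε < ‖a s‖}.Finite) ∧
      (∀ ε > (0 : ℝ), {t | ε < ‖b t‖}.Finite) ∧
      (∃ A : ℂ, HasGreedySum a 0 A) ∧
      (∃ B : ℂ, HasGreedySum b 0 B) ∧
      ¬ ∃ C : ℂ, HasGreedySum (fun p : S × T => a p.1 * b p.2) 0 C := by
  refine ⟨ℕ × ℕ, ℕ × ℕ, aa, aa, ?_, ?_, ?_, ?_, ?_⟩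
  · exact fun ε hε => level_finite hε
  · exact fun ε hε => level_finite hε
  · exact hasA
  · exact hasA
  · exact noC
end

section
/- Consistency theorem for Riesz means (Hardy–Riesz, Theorem 16, used to prove Theorem 1): Let (λ_n)_{n∈ℕ} be a strictly increasing sequence of positive real numbers tending to infinity, let (a_n)_{n∈ℕ} be complex numbers, and let κ ≥ 0. If the series ∑ a_n is Riesz summable with parameters ((λ_n), κ) to the sum A, then for every κ' ≥ κ it is Riesz summable with parameters ((λ_n), κ') to the same sum A. -/
open Filter Topology

/-- The Riesz mean of order `κ` of a series `∑ a n` with exponents `l n`, at the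
point `ω`: `∑_{n : l n < ω} (1 - l n / ω)^κ • a n`. -/
noncomputable def rieszMean (l : ℕ → ℝ) (a : ℕ → ℂ) (κ : ℝ) (ω : ℝ) : ℂ :=
  ∑ᶠ n ∈ {n | l n < ω}, ((1 - l n / ω) ^ κ : ℝ) • a n

/-- The series `∑ a n` is Riesz summable with parameters `(l, κ)` to `A` if its
Riesz means of order `κ` converge to `A` as `ω → ∞`. -/
def RieszSummableTo (l : ℕ → ℝ) (a : ℕ → ℂ) (κ : ℝ) (A : ℂ) : Prop :=
  Tendsto (rieszMean l a κ) atTop (𝓝 A)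


section RieszAux

open MeasureTheory Set intervalIntegral

noncomputable def betaC (κ δ : ℝ) : ℝ := ∫ x in (0:ℝ)..1, x ^ κ * (1 - x) ^ (δ - 1)

lemma betaKernel_integrable {κ δ : ℝ} (hκ : 0 ≤ κ) (hδ : 0 < δ) (lam ω : ℝ) :
    IntervalIntegrable (fun t => (t - lam) ^ κ * (ω - t) ^ (δ - 1)) volume lam ω := by
  have h1 : IntervalIntegrable (fun t : ℝ => (ω - t) ^ (δ - 1)) volume lam ω := by
    have := (intervalIntegrable_rpow' (r := δ - 1) (by linarith)
      (a := ω - lam) (b := ω - ω)).comp_sub_left ω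
    simpa using this
  have h2 : ContinuousOn (fun t : ℝ => (t - lam) ^ κ) (Set.uIcc lam ω) :=
    ContinuousOn.rpow_const (by fun_prop) (fun x _ => Or.inr hκ)
  simpa using h1.continuousOn_mul h2

lemma betaC_pos {κ δ : ℝ} (hκ : 0 ≤ κ) (hδ : 0 < δ) : 0 < betaC κ δ := by
  apply intervalIntegral.intervalIntegral_pos_of_pos_on
  · have := betaKernel_integrable hκ hδ 0 1
    simpa using this
  · intro x hx
    have h1 : (0:ℝ) < x ^ κ := Real.rpow_pos_of_pos hx.1 _
    have h2 : (0:ℝ) < (1 - x) ^ (δ - 1) := Real.rpow_pos_of_pos (by linarith [hx.2]) _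
    positivity
  · norm_num

lemma beta_scaling0 {κ δ : ℝ} (hκ : 0 ≤ κ) (hδ : 0 < δ) {s : ℝ} (hs : 0 < s) :
    ∫ t in (0:ℝ)..s, t ^ κ * (s - t) ^ (δ - 1) = s ^ (κ + δ) * betaC κ δ := by
  have key : (s • ∫ x in (0:ℝ)..1, (fun t => t ^ κ * (s - t) ^ (δ - 1)) (s * x))
      = ∫ t in (0:ℝ)..s, t ^ κ * (s - t) ^ (δ - 1) := by
    simpa using smul_integral_comp_mul_left (fun t => t ^ κ * (s - t) ^ (δ - 1)) s
      (a := (0:ℝ)) (b := 1)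
  rw [← key]
  have congr1 : ∫ x in (0:ℝ)..1, (s * x) ^ κ * (s - s * x) ^ (δ - 1)
      = ∫ x in (0:ℝ)..1, s ^ (κ + δ - 1) * (x ^ κ * (1 - x) ^ (δ - 1)) := by
    apply intervalIntegral.integral_congr
    intro x hx
    rw [Set.uIcc_of_le (by norm_num : (0:ℝ) ≤ 1)] at hx
    have hx0 : 0 ≤ x := hx.1
    have hx1 : x ≤ 1 := hx.2
    have e1 : (s * x) ^ κ = s ^ κ * x ^ κ := Real.mul_rpow hs.le hx0
    have e2 : s - s * x = s * (1 - x) := by ring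
    have e3 : (s * (1 - x)) ^ (δ - 1) = s ^ (δ - 1) * (1 - x) ^ (δ - 1) :=
      Real.mul_rpow hs.le (by linarith)
    simp only []
    rw [e1, e2, e3]
    rw [show s ^ (κ + δ - 1) = s ^ κ * s ^ (δ - 1) by
      rw [← Real.rpow_add hs]; ring_nf]
    ring
  simp only []
  rw [congr1, intervalIntegral.integral_const_mul, smul_eq_mul, ← mul_assoc]
  rw [show s * s ^ (κ + δ - 1) = s ^ (κ + δ) by
    nth_rewrite 1 [← Real.rpow_one s]
    rw [← Real.rpow_add hs]; ring_nf]
  rfl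

lemma beta_scaling {κ δ : ℝ} (hκ : 0 ≤ κ) (hδ : 0 < δ) {lam ω : ℝ} (hlt : lam < ω) :
    ∫ t in lam..ω, (t - lam) ^ κ * (ω - t) ^ (δ - 1) = (ω - lam) ^ (κ + δ) * betaC κ δ := by
  have := intervalIntegral.integral_comp_add_right
    (a := (0:ℝ)) (b := ω - lam) (fun t => (t - lam) ^ κ * (ω - t) ^ (δ - 1)) lam
  simp only [zero_add, sub_add_cancel] at this
  rw [← this]
  have : ∀ x, (x + lam - lam) ^ κ * (ω - (x + lam)) ^ (δ - 1)
      = x ^ κ * ((ω - lam) - x) ^ (δ - 1) := by intro x; ring_nf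
  simp only [this]
  exact beta_scaling0 hκ hδ (by linarith)

lemma lt_finite {l : ℕ → ℝ} (htop : Tendsto l atTop atTop) (ω : ℝ) :
    {n | l n < ω}.Finite := by
  obtain ⟨N, hN⟩ := (htop.eventually_ge_atTop ω).exists_forall_of_atTop
  apply Set.Finite.subset (Set.finite_Iio N)
  intro n hn
  by_contra hc
  exact absurd (hN n (not_lt.mp hc)) (not_le.mpr hn)

lemma rieszMean_eq_sum {l : ℕ → ℝ} {a : ℕ → ℂ} {κ t : ℝ} {F : Finset ℕ}
    (hF : {n | l n < t} ⊆ ↑F) :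
    rieszMean l a κ t = ∑ n ∈ F, (if l n < t then ((1 - l n / t) ^ κ : ℝ) else 0) • a n := by
  rw [rieszMean, finsum_mem_def,
    finsum_eq_sum_of_support_subset _
      (fun n hn => hF (Set.mem_of_indicator_ne_zero hn))]
  refine Finset.sum_congr rfl fun n _ => ?_
  simp [Set.indicator_apply, ite_smul]

lemma indic_integral {κ δ : ℝ} (hκ : 0 ≤ κ) (hδ : 0 < δ) {lam ω : ℝ}
    (hlam : 0 < lam) (hlt : lam < ω) :
    IntervalIntegrable (Set.indicator (Set.Ioi lam)
        (fun u => (u - lam) ^ κ * (ω - u) ^ (δ - 1))) volume 0 ω ∧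
    ∫ t in (0:ℝ)..ω, Set.indicator (Set.Ioi lam)
        (fun u => (u - lam) ^ κ * (ω - u) ^ (δ - 1)) t
      = ∫ t in lam..ω, (t - lam) ^ κ * (ω - t) ^ (δ - 1) := by
  have hω : 0 < ω := lt_trans hlam hlt
  have hset : Set.Ioc 0 ω ∩ Set.Ioi lam = Set.Ioc lam ω := by
    ext x
    simp only [Set.mem_inter_iff, Set.mem_Ioi, Set.mem_Ioc]
    constructor
    · rintro ⟨⟨_, hx2⟩, hx3⟩; exact ⟨hx3, hx2⟩
    · rintro ⟨hx1, hx2⟩; exact ⟨⟨lt_trans hlam hx1, hx2⟩, hx1⟩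
  constructor
  · rw [intervalIntegrable_iff_integrableOn_Ioc_of_le hω.le,
      IntegrableOn, MeasureTheory.integrable_indicator_iff measurableSet_Ioi,
      IntegrableOn, Measure.restrict_restrict measurableSet_Ioi, Set.inter_comm, hset]
    exact (intervalIntegrable_iff_integrableOn_Ioc_of_le hlt.le).mp
      (betaKernel_integrable hκ hδ lam ω)
  · rw [integral_of_le hω.le, integral_of_le hlt.le,
      MeasureTheory.setIntegral_indicator measurableSet_Ioi, hset]

lemma rpow_one_sub_div {x y p : ℝ} (hx : 0 < x) (hyx : y ≤ x) :
    x ^ p * (1 - y / x) ^ p = (x - y) ^ p := by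
  rw [← Real.mul_rpow hx.le (by rw [sub_nonneg]; exact (div_le_one hx).mpr hyx)]
  congr 1
  field_simp

lemma riesz_repr (l : ℕ → ℝ) (hpos : ∀ n, 0 < l n) (htop : Tendsto l atTop atTop)
    (a : ℕ → ℂ) {κ δ : ℝ} (hκ : 0 ≤ κ) (hδ : 0 < δ) {ω : ℝ} (hω : 0 < ω) :
    IntervalIntegrable (fun t => ((t ^ κ * (ω - t) ^ (δ - 1) : ℝ)) • rieszMean l a κ t)
      volume 0 ω ∧
    ((ω ^ (κ + δ) * betaC κ δ : ℝ)) • rieszMean l a (κ + δ) ω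
      = ∫ t in (0:ℝ)..ω, ((t ^ κ * (ω - t) ^ (δ - 1) : ℝ)) • rieszMean l a κ t := by
  have hfin := lt_finite htop ω
  set F := hfin.toFinset with hFdef
  have hFmem : ∀ n, n ∈ F ↔ l n < ω := fun n => Set.Finite.mem_toFinset _
  set g : ℕ → ℝ → ℝ := fun n => Set.indicator (Set.Ioi (l n))
      (fun u => (u - l n) ^ κ * (ω - u) ^ (δ - 1)) with hg
  have hgint : ∀ n ∈ F, IntervalIntegrable (fun t => g n t • a n) volume 0 ω :=
    fun n hn => ⟨((indic_integral hκ hδ (hpos n) ((hFmem n).mp hn)).1).1.smul_const (a n),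
        ((indic_integral hκ hδ (hpos n) ((hFmem n).mp hn)).1).2.smul_const (a n)⟩
  have step1 : Set.EqOn (fun t => ((t ^ κ * (ω - t) ^ (δ - 1) : ℝ)) • rieszMean l a κ t)
      (fun t => ∑ n ∈ F, (g n t) • a n) (Set.uIcc 0 ω) := by
    intro t ht
    rw [Set.uIcc_of_le hω.le] at ht
    have hsub : {n | l n < t} ⊆ ↑F := fun n hn => (hFmem n).mpr (lt_of_lt_of_le hn ht.2)
    simp only []
    rw [rieszMean_eq_sum hsub, Finset.smul_sum]
    refine Finset.sum_congr rfl fun n hn => ?_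
    rw [smul_smul]
    congr 1
    by_cases hlt : l n < t
    · have ht0 : 0 < t := lt_trans (hpos n) hlt
      rw [if_pos hlt, hg]
      simp only [Set.indicator_of_mem (Set.mem_Ioi.mpr hlt)]
      have key := rpow_one_sub_div (y := l n) (p := κ) ht0 hlt.le
      linear_combination ((ω - t) ^ (δ - 1)) * key
    · rw [if_neg hlt, hg]
      simp only [Set.indicator_of_notMem (fun hc => hlt (Set.mem_Ioi.mp hc))]
      ring
  constructor
  · apply (IntervalIntegrable.sum F hgint).congr
    intro t ht
    simpa [Finset.sum_apply] using (step1 (Set.uIoc_subset_uIcc ht)).symm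
  rw [intervalIntegral.integral_congr step1,
    intervalIntegral.integral_finset_sum hgint,
    rieszMean_eq_sum (fun n hn => (hFmem n).mpr hn), Finset.smul_sum]
  refine Finset.sum_congr rfl fun n hn => ?_
  have hlt : l n < ω := (hFmem n).mp hn
  rw [intervalIntegral.integral_smul_const, (indic_integral hκ hδ (hpos n) hlt).2,
    beta_scaling hκ hδ hlt, if_pos hlt, smul_smul]
  congr 1
  have key := rpow_one_sub_div (y := l n) (p := κ + δ) hω hlt.le
  linear_combination (betaC κ δ) * key

lemma err_tendsto {κ δ B K : ℝ} (hκ : 0 ≤ κ) (hδ : 0 < δ) (hB : 0 < B) :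
    Tendsto (fun ω : ℝ => (ω ^ (κ + δ) * B)⁻¹ * (K * ω ^ (δ - 1))) atTop (𝓝 0) := by
  have heq : ∀ᶠ ω : ℝ in atTop, (K / B) * ω ^ (-(κ + 1))
      = (ω ^ (κ + δ) * B)⁻¹ * (K * ω ^ (δ - 1)) := by
    filter_upwards [eventually_gt_atTop (0:ℝ)] with ω hω
    have e : ω ^ (-(κ+1)) = ω ^ (δ - 1) * (ω ^ (κ + δ))⁻¹ := by
      rw [← Real.rpow_neg hω.le, ← Real.rpow_add hω]
      congr 1
      ring
    rw [e, mul_inv]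
    ring
  have h0 : Tendsto (fun ω : ℝ => (K / B) * ω ^ (-(κ + 1))) atTop (𝓝 0) := by
    have := (tendsto_rpow_neg_atTop (y := κ + 1) (by linarith)).const_mul (K / B)
    simpa using this
  exact h0.congr' heq

lemma rieszMean_norm_le {l : ℕ → ℝ} (hpos : ∀ n, 0 < l n) {a : ℕ → ℂ} {κ : ℝ}
    (hκ : 0 ≤ κ) {t T : ℝ} (ht : t ≤ T) {F : Finset ℕ} (hF : {n | l n < T} ⊆ ↑F) :
    ‖rieszMean l a κ t‖ ≤ ∑ n ∈ F, ‖a n‖ := by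
  rw [rieszMean_eq_sum (fun n hn => hF (lt_of_lt_of_le hn ht))]
  refine (norm_sum_le _ _).trans (Finset.sum_le_sum fun n _ => ?_)
  rw [norm_smul, Real.norm_eq_abs]
  by_cases hlt : l n < t
  · have ht0 : 0 < t := lt_trans (hpos n) hlt
    rw [if_pos hlt]
    have h1 : 0 ≤ 1 - l n / t := by
      rw [sub_nonneg]; exact (div_le_one ht0).mpr hlt.le
    have h2 : 1 - l n / t ≤ 1 := by
      have : 0 ≤ l n / t := div_nonneg (hpos n).le ht0.le
      linarith
    have := Real.rpow_le_one h1 h2 hκ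
    have h3 : 0 ≤ (1 - l n / t) ^ κ := Real.rpow_nonneg h1 _
    calc |(1 - l n / t) ^ κ| * ‖a n‖ = (1 - l n / t) ^ κ * ‖a n‖ := by rw [abs_of_nonneg h3]
      _ ≤ 1 * ‖a n‖ := by gcongr
      _ = ‖a n‖ := one_mul _
  · rw [if_neg hlt]; simp


set_option maxHeartbeats 1000000 in
/-- Consistency theorem for Riesz means (Hardy–Riesz, Theorem 16): if `∑ a n` is
Riesz summable with parameters `(l, κ)` to `A`, then it is Riesz summable with
parameters `(l, κ')` to `A` for every `κ' ≥ κ`. -/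
theorem riesz_consistency (l : ℕ → ℝ) (hmono : StrictMono l)
    (hpos : ∀ n, 0 < l n) (htop : Tendsto l atTop atTop)
    (a : ℕ → ℂ) (κ κ' : ℝ) (hκ : 0 ≤ κ) (hκκ' : κ ≤ κ') (A : ℂ)
    (h : RieszSummableTo l a κ A) :
    RieszSummableTo l a κ' A := by
  rcases eq_or_lt_of_le hκκ' with heq | hlt
  · rwa [← heq]
  set δ := κ' - κ with hδdef
  have hδ : 0 < δ := by rw [hδdef]; linarith
  have hκ' : κ' = κ + δ := by rw [hδdef]; ring
  set B := betaC κ δ with hBdef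
  have hB : 0 < B := betaC_pos hκ hδ
  rw [RieszSummableTo, Metric.tendsto_nhds]
  intro ε hε
  obtain ⟨T₀, hT₀⟩ := (Metric.tendsto_atTop.mp h) (ε/2) (by linarith)
  set T := max T₀ 1 with hTdef
  have hT1 : (0:ℝ) < T := lt_of_lt_of_le one_pos (le_max_right _ _)
  set F := (lt_finite htop T).toFinset with hFdef
  set M := (∑ n ∈ F, ‖a n‖) + ‖A‖ with hMdef
  have hM0 : 0 ≤ M := by positivity
  have hMb : ∀ t : ℝ, t ≤ T → ‖rieszMean l a κ t - A‖ ≤ M := by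
    intro t ht
    calc ‖rieszMean l a κ t - A‖ ≤ ‖rieszMean l a κ t‖ + ‖A‖ := norm_sub_le _ _
      _ ≤ M := by
        rw [hMdef]
        gcongr
        exact rieszMean_norm_le hpos hκ ht
          (fun n hn => (Set.Finite.mem_toFinset _).mpr hn)
  set c2 : ℝ := (2⁻¹ : ℝ) ^ (δ - 1) + 1 with hc2def
  have hc2 : 0 < c2 := by
    have := Real.rpow_pos_of_pos (by norm_num : (0:ℝ) < 2⁻¹) (δ - 1)
    rw [hc2def]; linarith
  set K := T ^ κ * c2 * M * T with hKdef
  have herr := (err_tendsto (K := K) (B := B) hκ hδ hB).eventually_lt_const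
    (by linarith : (0:ℝ) < ε/2)
  filter_upwards [eventually_ge_atTop (2*T), herr] with ω hω2T herrω
  have hTω : T ≤ ω := by linarith
  have hω : 0 < ω := lt_of_lt_of_le hT1 hTω
  set c := ω ^ (κ + δ) * B with hcdef
  have hc : 0 < c := mul_pos (Real.rpow_pos_of_pos hω _) hB
  set k : ℝ → ℝ := fun t => t ^ κ * (ω - t) ^ (δ - 1) with hkdef
  set f := rieszMean l a κ with hfdef
  obtain ⟨hint, hrepr⟩ := riesz_repr l hpos htop a hκ hδ hω
  have hk_int : IntervalIntegrable k volume 0 ω := by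
    have := betaKernel_integrable hκ hδ 0 ω
    simpa [hkdef, sub_zero] using this
  have hk_nonneg : ∀ x ∈ Set.Icc (0:ℝ) ω, 0 ≤ k x := fun x hx =>
    mul_nonneg (Real.rpow_nonneg hx.1 _) (Real.rpow_nonneg (by linarith [hx.2]) _)
  set φ : ℝ → ℂ := fun t => k t • (f t - A) with hφdef
  have hkA_int : IntervalIntegrable (fun t => k t • A) volume 0 ω :=
    ⟨hk_int.1.smul_const A, hk_int.2.smul_const A⟩
  have hφeq : φ = fun t => (k t • f t) - k t • A := funext fun t => smul_sub _ _ _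
  have hφint : IntervalIntegrable φ volume 0 ω := by
    rw [hφeq]; exact hint.sub hkA_int
  have hkint_eq : ∫ t in (0:ℝ)..ω, k t = c := by
    rw [hcdef, hBdef]
    have := beta_scaling hκ hδ (lam := 0) (ω := ω) hω
    simpa [hkdef, sub_zero] using this
  have hφ_integral : ∫ t in (0:ℝ)..ω, φ t = c • (rieszMean l a (κ + δ) ω - A) := by
    rw [hφeq, intervalIntegral.integral_sub hint hkA_int, ← hrepr,
      intervalIntegral.integral_smul_const, hkint_eq, smul_sub]
  have hmemT : T ∈ Set.uIcc (0:ℝ) ω := by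
    rw [Set.uIcc_of_le hω.le]; exact ⟨hT1.le, hTω⟩
  have hmem0 : (0:ℝ) ∈ Set.uIcc (0:ℝ) ω := Set.left_mem_uIcc
  have hmemω : ω ∈ Set.uIcc (0:ℝ) ω := Set.right_mem_uIcc
  have hsub1 : IntervalIntegrable φ volume 0 T :=
    hφint.mono_set (Set.uIcc_subset_uIcc hmem0 hmemT)
  have hsub2 : IntervalIntegrable φ volume T ω :=
    hφint.mono_set (Set.uIcc_subset_uIcc hmemT hmemω)
  have hsplit : ∫ t in (0:ℝ)..ω, φ t = (∫ t in (0:ℝ)..T, φ t) + ∫ t in T..ω, φ t :=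
    (intervalIntegral.integral_add_adjacent_intervals hsub1 hsub2).symm
  have hI1 : ‖∫ t in (0:ℝ)..T, φ t‖ ≤ K * ω ^ (δ - 1) := by
    have hb : ∀ x ∈ Set.uIoc (0:ℝ) T, ‖φ x‖ ≤ T ^ κ * (c2 * ω ^ (δ - 1)) * M := by
      intro x hx
      rw [Set.uIoc_of_le hT1.le] at hx
      have hxω : x ≤ ω := le_trans hx.2 hTω
      rw [hφdef]
      simp only []
      rw [norm_smul, Real.norm_eq_abs, abs_of_nonneg (hk_nonneg x ⟨hx.1.le, hxω⟩)]
      have hb1 : x ^ κ ≤ T ^ κ := Real.rpow_le_rpow hx.1.le hx.2 hκ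
      have hb2 : (ω - x) ^ (δ - 1) ≤ c2 * ω ^ (δ - 1) := by
        rcases le_or_gt 1 δ with h1 | h1
        · have hle : (ω - x) ^ (δ - 1) ≤ ω ^ (δ - 1) :=
            Real.rpow_le_rpow (by linarith) (by linarith [hx.1]) (by linarith)
          have h2 : 0 ≤ (2⁻¹:ℝ) ^ (δ - 1) * ω ^ (δ - 1) :=
            mul_nonneg (Real.rpow_nonneg (by norm_num) _) (Real.rpow_nonneg hω.le _)
          rw [hc2def]; nlinarith
        · have hhalf : (0:ℝ) < 2⁻¹ * ω := by linarith
          have hle2 : 2⁻¹ * ω ≤ ω - x := by linarith [hx.2]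
          have hle : (ω - x) ^ (δ - 1) ≤ (2⁻¹ * ω) ^ (δ - 1) :=
            Real.rpow_le_rpow_of_nonpos hhalf hle2 (by linarith)
          have e : ((2:ℝ)⁻¹ * ω) ^ (δ - 1) = (2⁻¹:ℝ) ^ (δ - 1) * ω ^ (δ - 1) :=
            Real.mul_rpow (by norm_num) hω.le
          have h3 : 0 ≤ ω ^ (δ - 1) := Real.rpow_nonneg hω.le _
          rw [hc2def]; nlinarith
      have hfb : ‖f x - A‖ ≤ M := hMb x hx.2
      have hknn : 0 ≤ x ^ κ := Real.rpow_nonneg hx.1.le _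
      have h4 : x ^ κ * (ω - x) ^ (δ - 1) ≤ T ^ κ * (c2 * ω ^ (δ - 1)) :=
        mul_le_mul hb1 hb2 (Real.rpow_nonneg (by linarith) _)
          (Real.rpow_nonneg hT1.le _)
      exact mul_le_mul h4 hfb (norm_nonneg _)
        (mul_nonneg (Real.rpow_nonneg hT1.le _) (by positivity))
    have := intervalIntegral.norm_integral_le_of_norm_le_const hb
    calc ‖∫ t in (0:ℝ)..T, φ t‖ ≤ T ^ κ * (c2 * ω ^ (δ - 1)) * M * |T - 0| := this
      _ = K * ω ^ (δ - 1) := by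
          rw [sub_zero, abs_of_pos hT1, hKdef]; ring
  have hI2 : ‖∫ t in T..ω, φ t‖ ≤ ε / 2 * c := by
    have hbd : IntervalIntegrable (fun t => ε / 2 * k t) volume T ω :=
      (hk_int.mono_set (Set.uIcc_subset_uIcc hmemT hmemω)).const_mul _
    have hae : ∀ᵐ t ∂(MeasureTheory.volume.restrict (Set.uIoc T ω)),
        ‖φ t‖ ≤ ε / 2 * k t := by
      filter_upwards [MeasureTheory.ae_restrict_mem measurableSet_uIoc] with t ht
      rw [Set.uIoc_of_le hTω] at ht
      have htpos : 0 < t := lt_trans hT1 ht.1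
      have hk0 : 0 ≤ k t := hk_nonneg t ⟨htpos.le, ht.2⟩
      rw [hφdef]
      simp only []
      rw [norm_smul, Real.norm_eq_abs, abs_of_nonneg hk0]
      have hdist : ‖f t - A‖ ≤ ε / 2 := by
        have := hT₀ t (le_trans (le_max_left T₀ 1) ht.1.le)
        rw [dist_eq_norm] at this
        linarith
      calc k t * ‖f t - A‖ ≤ k t * (ε / 2) := mul_le_mul_of_nonneg_left hdist hk0
        _ = ε / 2 * k t := mul_comm _ _
    have h1 := intervalIntegral.norm_integral_le_abs_of_norm_le hae hbd
    have h4 : 0 ≤ ∫ t in T..ω, k t :=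
      intervalIntegral.integral_nonneg hTω
        (fun u hu => hk_nonneg u ⟨le_trans hT1.le hu.1, hu.2⟩)
    have h3 : ∫ t in T..ω, k t ≤ c := by
      have hadd : (∫ t in (0:ℝ)..T, k t) + ∫ t in T..ω, k t = ∫ t in (0:ℝ)..ω, k t :=
        intervalIntegral.integral_add_adjacent_intervals
          (hk_int.mono_set (Set.uIcc_subset_uIcc hmem0 hmemT))
          (hk_int.mono_set (Set.uIcc_subset_uIcc hmemT hmemω))
      have hnn : 0 ≤ ∫ t in (0:ℝ)..T, k t :=
        intervalIntegral.integral_nonneg hT1.le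
          (fun u hu => hk_nonneg u ⟨hu.1, le_trans hu.2 hTω⟩)
      rw [hkint_eq] at hadd
      linarith
    calc ‖∫ t in T..ω, φ t‖ ≤ |∫ t in T..ω, ε / 2 * k t| := h1
      _ = ε / 2 * ∫ t in T..ω, k t := by
          rw [intervalIntegral.integral_const_mul,
            abs_of_nonneg (mul_nonneg (by linarith : (0:ℝ) ≤ ε / 2) h4)]
      _ ≤ ε / 2 * c := mul_le_mul_of_nonneg_left h3 (by linarith)
  rw [dist_eq_norm, hκ']
  have hnorm : ‖rieszMean l a (κ + δ) ω - A‖ = c⁻¹ * ‖∫ t in (0:ℝ)..ω, φ t‖ := by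
    rw [hφ_integral, norm_smul, Real.norm_eq_abs, abs_of_pos hc, ← mul_assoc,
      inv_mul_cancel₀ (ne_of_gt hc), one_mul]
  rw [hnorm]
  have hcinv : (0:ℝ) ≤ c⁻¹ := inv_nonneg.mpr hc.le
  calc c⁻¹ * ‖∫ t in (0:ℝ)..ω, φ t‖
      ≤ c⁻¹ * (‖∫ t in (0:ℝ)..T, φ t‖ + ‖∫ t in T..ω, φ t‖) := by
        rw [hsplit]
        exact mul_le_mul_of_nonneg_left (norm_add_le _ _) hcinv
    _ ≤ c⁻¹ * (K * ω ^ (δ - 1)) + c⁻¹ * (ε / 2 * c) := by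
        rw [← mul_add]
        exact mul_le_mul_of_nonneg_left (add_le_add hI1 hI2) hcinv
    _ < ε / 2 + ε / 2 := by
        have heq2 : c⁻¹ * (ε / 2 * c) = ε / 2 := by
          field_simp
        rw [heq2]
        exact add_lt_add_left herrω _
    _ = ε := by ring

end RieszAux
end
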